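/- Let 0<p<1, q=1-p. For i.i.d. Bernoulli(p) variables X_1,...,X_{2m-1} with m ≥ 3 and T=2, let A_n be the event that exactly two of X_n,...,X_{n+m-1} equal 0. The probability of the part of A_1 ∩ complement(A_2) ∩ ... ∩ complement(A_m) on which X_1=0 equals (m-1) q^2 p^{2m-3} + ((m-1)(m-2)/2) q^3 p^{2m-4}. -/

import Mathlib

open MeasureTheory ProbabilityTheory Finset Filter

/-- Number of zeros (tails) among `X n, X (n+1), ..., X (n+m-1)`. -/
def zerosCount {Ω : Type*} (X : ℕ → Ω → Bool) (n m : ℕ) (ω : Ω) : ℕ :=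
  ((Finset.range m).filter (fun j => X (n + j) ω = false)).card

/-- The event that the window of length `m` starting at `n` contains exactly `T` zeros. -/
def contamRun {Ω : Type*} (X : ℕ → Ω → Bool) (T n m : ℕ) : Set Ω :=
  {ω | zerosCount X n m ω = T}

def gsA (m : ℕ) : Finset (Finset ℕ) :=
  (Finset.Icc 2 m).image fun k => ({1, k} : Finset ℕ)
def gsB (m : ℕ) : Finset (Finset ℕ) :=
  (Finset.Icc 2 (m-1)).biUnion fun k =>
    (Finset.Icc (m+k) (2*m-1)).image fun j => ({1, k, j} : Finset ℕ)

def goodSets (m : ℕ) : Finset (Finset ℕ) := gsA m ∪ gsB m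

def atomSet {Ω : Type*} (X : ℕ → Ω → Bool) (m : ℕ) (S : Finset ℕ) : Set Ω :=
  {ω | ∀ i ∈ Finset.Icc 1 (2*m-1), (X i ω = false ↔ i ∈ S)}

lemma zerosCount_eq {Ω : Type*} (X : ℕ → Ω → Bool) (n m : ℕ) (ω : Ω) :
    zerosCount X n m ω = ((Finset.Ico n (n+m)).filter (fun i => X i ω = false)).card := by
  unfold zerosCount
  rw [show Finset.Ico n (n+m) = (Finset.range m).image (n + ·) by
    ext i; simp only [Finset.mem_Ico, Finset.mem_image, Finset.mem_range]
    constructor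
    · rintro ⟨h1, h2⟩; exact ⟨i - n, by omega, by omega⟩
    · rintro ⟨j, hj, rfl⟩; omega]
  rw [Finset.filter_image, Finset.card_image_of_injective _ (fun a b h => by omega)]

section Forward
variable {Ω : Type*} (X : ℕ → Ω → Bool) (m : ℕ)

lemma forward (hm : 3 ≤ m) (ω : Ω)
    (h1 : zerosCount X 1 m ω = 2)
    (h2 : ∀ n, 2 ≤ n → n ≤ m → zerosCount X n m ω ≠ 2)
    (h0 : X 1 ω = false) :
    ∃ S ∈ goodSets m, ω ∈ atomSet X m S := by
  classical
  set P : ℕ → Prop := fun i => X i ω = false with hP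
  set Z : Finset ℕ := (Finset.Icc 1 (2*m-1)).filter P with hZ
  have hZmem : ∀ i, i ∈ Z ↔ (1 ≤ i ∧ i ≤ 2*m-1 ∧ P i) := by
    intro i; simp [hZ, Finset.mem_filter, Finset.mem_Icc]; tauto
  -- window identity
  have hwin : ∀ n, 1 ≤ n → n ≤ m →
      zerosCount X n m ω = (Z ∩ Finset.Ico n (n+m)).card := by
    intro n hn1 hnm
    rw [zerosCount_eq]
    congr 1
    ext i
    simp only [Finset.mem_filter, Finset.mem_Ico, Finset.mem_inter, hZmem]
    constructor
    · rintro ⟨⟨ha, hb⟩, hp⟩; exact ⟨⟨by omega, by omega, hp⟩, ha, hb⟩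
    · rintro ⟨⟨_, _, hp⟩, ha, hb⟩; exact ⟨⟨ha, hb⟩, hp⟩
  have h1' : (Z ∩ Finset.Ico 1 (1+m)).card = 2 := by
    rw [← hwin 1 le_rfl (by omega)]; exact h1
  have h1Z : (1 : ℕ) ∈ Z ∩ Finset.Ico 1 (1+m) := by
    simp only [Finset.mem_inter, hZmem, Finset.mem_Ico]
    exact ⟨⟨le_rfl, by omega, h0⟩, le_rfl, by omega⟩
  -- extract k
  obtain ⟨a, b, hab, hW⟩ := Finset.card_eq_two.mp h1'
  have hk : ∃ k, 2 ≤ k ∧ k ≤ m ∧ Z ∩ Finset.Ico 1 (1+m) = {1, k} := by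
    rw [hW] at h1Z
    simp only [Finset.mem_insert, Finset.mem_singleton] at h1Z
    rcases h1Z with rfl | rfl
    · have hbW : b ∈ Z ∩ Finset.Ico 1 (1+m) := by rw [hW]; simp
      simp only [Finset.mem_inter, Finset.mem_Ico] at hbW
      exact ⟨b, by omega, by omega, hW⟩
    · have haW : a ∈ Z ∩ Finset.Ico 1 (1+m) := by rw [hW]; simp
      simp only [Finset.mem_inter, Finset.mem_Ico] at haW
      exact ⟨a, by omega, by omega, by rw [hW]; ext i; simp; tauto⟩
  obtain ⟨k, hk2, hkm, hWk⟩ := hk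
  have hZ1m : ∀ i, i ∈ Z → i ≤ m → (i = 1 ∨ i = k) := by
    intro i hi him
    have : i ∈ Z ∩ Finset.Ico 1 (1+m) := by
      simp only [Finset.mem_inter, Finset.mem_Ico]
      rw [hZmem] at hi
      exact ⟨by rw [hZmem]; exact hi, by omega, by omega⟩
    rw [hWk] at this; simpa using this
  have hkZ : k ∈ Z := by
    have : k ∈ Z ∩ Finset.Ico 1 (1+m) := by rw [hWk]; simp
    exact (Finset.mem_inter.mp this).1
  have h1Z' : (1:ℕ) ∈ Z := by
    have : (1:ℕ) ∈ Z ∩ Finset.Ico 1 (1+m) := by rw [hWk]; simp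
    exact (Finset.mem_inter.mp this).1
  -- Step D: no zeros in [m+1, m+k-1]
  have hD : ∀ i, i ∈ Z → m+1 ≤ i → i < m+k → False := by
    intro i hi him himk
    set Zmid : Finset ℕ := Z.filter (fun i => m+1 ≤ i ∧ i < m+k) with hZmid
    have hne : Zmid.Nonempty := ⟨i, by simp [hZmid, Finset.mem_filter]; exact ⟨hi, him, himk⟩⟩
    set i₀ := Zmid.min' hne with hi₀
    have hi₀mem : i₀ ∈ Zmid := Finset.min'_mem _ _
    have hi₀min : ∀ x ∈ Zmid, i₀ ≤ x := fun x hx => Finset.min'_le _ _ hx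
    simp only [hZmid, Finset.mem_filter] at hi₀mem
    obtain ⟨hi₀Z, hi₀l, hi₀u⟩ := hi₀mem
    set n := i₀ - m + 1 with hn
    have hn2 : 2 ≤ n := by omega
    have hnk : n ≤ k := by omega
    have hcnt : Z ∩ Finset.Ico n (n+m) = {k, i₀} := by
      ext x
      simp only [Finset.mem_inter, Finset.mem_Ico, Finset.mem_insert, Finset.mem_singleton]
      constructor
      · rintro ⟨hxZ, hxa, hxb⟩
        by_cases hxm : x ≤ m
        · rcases hZ1m x hxZ hxm with rfl | rfl
          · omega
          · left; rfl
        · right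
          have hxmid : x ∈ Zmid := by
            simp only [hZmid, Finset.mem_filter]
            exact ⟨hxZ, by omega, by omega⟩
          have := hi₀min x hxmid
          omega
      · rintro (rfl | rfl)
        · exact ⟨hkZ, by omega, by omega⟩
        · exact ⟨hi₀Z, by omega, by omega⟩
    have : zerosCount X n m ω = 2 := by
      rw [hwin n (by omega) (by omega), hcnt]
      rw [Finset.card_insert_of_notMem (by simp; omega), Finset.card_singleton]
    exact h2 n hn2 (by omega) this
  -- Step E: at most one zero in [m+k, 2m-1]
  set R : Finset ℕ := Z.filter (fun i => m+k ≤ i) with hR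
  have hE : R.card ≤ 1 := by
    by_contra hcon
    push_neg at hcon
    obtain ⟨i₁, hi₁R, hi₁min, R'⟩ : ∃ i₁, i₁ ∈ R ∧ (∀ x ∈ R, i₁ ≤ x) ∧ True := by
      have hne : R.Nonempty := Finset.card_pos.mp (by omega)
      exact ⟨R.min' hne, Finset.min'_mem _ _, fun x hx => Finset.min'_le _ _ hx, trivial⟩
    have hne' : (R.erase i₁).Nonempty := by
      rw [← Finset.card_pos, Finset.card_erase_of_mem hi₁R]; omega
    set i₂ := (R.erase i₁).min' hne' with hi₂
    have hi₂mem : i₂ ∈ R.erase i₁ := Finset.min'_mem _ _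
    have hi₂min : ∀ x ∈ R.erase i₁, i₂ ≤ x := fun x hx => Finset.min'_le _ _ hx
    have hi₂ne : i₂ ≠ i₁ := (Finset.mem_erase.mp hi₂mem).1
    have hi₂R : i₂ ∈ R := (Finset.mem_erase.mp hi₂mem).2
    simp only [hR, Finset.mem_filter] at hi₁R hi₂R
    have hi₁u : i₁ ≤ 2*m-1 := ((hZmem i₁).mp hi₁R.1).2.1
    have hi₂u : i₂ ≤ 2*m-1 := ((hZmem i₂).mp hi₂R.1).2.1
    have hi₁lti₂ : i₁ < i₂ := by
      have := hi₁min i₂ (by simp [hR, Finset.mem_filter]; exact hi₂R)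
      omega
    set n := i₂ - m + 1 with hn
    have hcnt : Z ∩ Finset.Ico n (n+m) = {i₁, i₂} := by
      ext x
      simp only [Finset.mem_inter, Finset.mem_Ico, Finset.mem_insert, Finset.mem_singleton]
      constructor
      · rintro ⟨hxZ, hxa, hxb⟩
        by_cases hxm : x ≤ m
        · rcases hZ1m x hxZ hxm with rfl | rfl <;> omega
        · by_cases hxk : x < m + k
          · exact absurd (hD x hxZ (by omega) hxk) (by simp)
          · have hxR : x ∈ R := by simp [hR, Finset.mem_filter]; exact ⟨hxZ, by omega⟩
            by_cases hx1 : x = i₁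
            · left; exact hx1
            · right
              have := hi₂min x (Finset.mem_erase.mpr ⟨hx1, hxR⟩)
              omega
      · rintro (rfl | rfl)
        · exact ⟨hi₁R.1, by omega, by omega⟩
        · exact ⟨hi₂R.1, by omega, by omega⟩
    have : zerosCount X n m ω = 2 := by
      rw [hwin n (by omega) (by omega), hcnt]
      rw [Finset.card_insert_of_notMem
        (by simp only [Finset.mem_singleton]; exact fun h => hi₂ne h.symm),
        Finset.card_singleton]
    exact h2 n (by omega) (by omega) this
  -- assemble
  have hZchar : ∀ i, i ∈ Z → (i = 1 ∨ i = k ∨ i ∈ R) := by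
    intro i hi
    rw [hZmem] at hi
    by_cases him : i ≤ m
    · have := hZ1m i (by rw [hZmem]; exact hi) him; tauto
    · by_cases hik : i < m + k
      · exact absurd (hD i (by rw [hZmem]; exact hi) (by omega) hik) (by simp)
      · right; right; simp [hR, Finset.mem_filter]; exact ⟨by rw [hZmem]; exact hi, by omega⟩
  have hatom : ω ∈ atomSet X m Z := by
    intro i hi
    simp only [Finset.mem_Icc] at hi
    rw [hZmem]
    constructor
    · intro hp; exact ⟨hi.1, hi.2, hp⟩
    · rintro ⟨_, _, hp⟩; exact hp
  refine ⟨Z, ?_, hatom⟩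
  rcases Finset.eq_empty_or_nonempty R with hRe | hRne
  · have hZeq : Z = {1, k} := by
      ext i
      simp only [Finset.mem_insert, Finset.mem_singleton]
      constructor
      · intro hi
        rcases hZchar i hi with h | h | h
        · tauto
        · tauto
        · rw [hRe] at h; simp at h
      · rintro (rfl | rfl)
        · exact h1Z'
        · exact hkZ
    rw [hZeq]
    apply Finset.mem_union_left
    exact Finset.mem_image.mpr ⟨k, Finset.mem_Icc.mpr ⟨hk2, hkm⟩, rfl⟩
  · obtain ⟨j, hjR⟩ := hRne
    have hRj : R = {j} := by
      have h1le : 1 ≤ R.card := Finset.card_pos.mpr ⟨j, hjR⟩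
      have : R.card = 1 := le_antisymm hE h1le
      obtain ⟨j', hj'⟩ := Finset.card_eq_one.mp this
      have hjj : j = j' := by rw [hj'] at hjR; simpa using hjR
      rw [hjj]; exact hj'
    simp only [hR, Finset.mem_filter] at hjR
    have hjZ : j ∈ Z := hjR.1
    have hjk : m + k ≤ j := hjR.2
    have hju : j ≤ 2*m-1 := ((hZmem j).mp hjZ).2.1
    have hkm' : k ≤ m - 1 := by omega
    have hZeq : Z = {1, k, j} := by
      ext i
      simp only [Finset.mem_insert, Finset.mem_singleton]
      constructor
      · intro hi
        rcases hZchar i hi with h | h | h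
        · tauto
        · tauto
        · rw [hRj] at h; simp at h; tauto
      · rintro (rfl | rfl | rfl)
        · exact h1Z'
        · exact hkZ
        · exact hjZ
    rw [hZeq]
    apply Finset.mem_union_right
    apply Finset.mem_biUnion.mpr
    exact ⟨k, Finset.mem_Icc.mpr ⟨hk2, hkm'⟩,
      Finset.mem_image.mpr ⟨j, Finset.mem_Icc.mpr ⟨hjk, hju⟩, rfl⟩⟩

lemma backward (hm : 3 ≤ m) (ω : Ω) (S : Finset ℕ) (hS : S ∈ goodSets m)
    (hω : ω ∈ atomSet X m S) :
    zerosCount X 1 m ω = 2 ∧ (∀ n, 2 ≤ n → n ≤ m → zerosCount X n m ω ≠ 2) ∧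
      X 1 ω = false := by
  classical
  have hcnt : ∀ n, 1 ≤ n → n ≤ m →
      zerosCount X n m ω = (S ∩ Finset.Ico n (n+m)).card := by
    intro n h1 h2
    rw [zerosCount_eq]
    congr 1
    ext i
    simp only [Finset.mem_filter, Finset.mem_Ico, Finset.mem_inter]
    constructor
    · rintro ⟨⟨ha, hb⟩, hp⟩
      exact ⟨(hω i (Finset.mem_Icc.mpr ⟨by omega, by omega⟩)).mp hp, ha, hb⟩
    · rintro ⟨hi, ha, hb⟩
      exact ⟨⟨ha, hb⟩, (hω i (Finset.mem_Icc.mpr ⟨by omega, by omega⟩)).mpr hi⟩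
  simp only [goodSets, gsA, gsB, Finset.mem_union, Finset.mem_image, Finset.mem_biUnion,
    Finset.mem_Icc] at hS
  rcases hS with ⟨k, ⟨hk2, hkm⟩, rfl⟩ | ⟨k, ⟨hk2, hkm⟩, j, ⟨hjl, hju⟩, rfl⟩
  · refine ⟨?_, ?_, ?_⟩
    · rw [hcnt 1 le_rfl (by omega)]
      have : ({1, k} : Finset ℕ) ∩ Finset.Ico 1 (1+m) = {1, k} := by
        apply Finset.inter_eq_left.mpr
        intro i hi
        simp only [Finset.mem_insert, Finset.mem_singleton] at hi
        simp only [Finset.mem_Ico]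
        rcases hi with rfl | rfl <;> omega
      rw [this, Finset.card_insert_of_notMem (by simp; omega), Finset.card_singleton]
    · intro n hn2 hnm
      rw [hcnt n (by omega) hnm]
      have hsub : ({1, k} : Finset ℕ) ∩ Finset.Ico n (n+m) ⊆ {k} := by
        intro i hi
        simp only [Finset.mem_inter, Finset.mem_insert, Finset.mem_singleton,
          Finset.mem_Ico] at hi ⊢
        rcases hi with ⟨rfl | rfl, ha, hb⟩
        · omega
        · rfl
      have := Finset.card_le_card hsub
      simp only [Finset.card_singleton] at this
      omega
    · exact (hω 1 (Finset.mem_Icc.mpr ⟨le_rfl, by omega⟩)).mpr (by simp)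
  · refine ⟨?_, ?_, ?_⟩
    · rw [hcnt 1 le_rfl (by omega)]
      have : ({1, k, j} : Finset ℕ) ∩ Finset.Ico 1 (1+m) = {1, k} := by
        ext i
        simp only [Finset.mem_inter, Finset.mem_insert, Finset.mem_singleton,
          Finset.mem_Ico]
        constructor
        · rintro ⟨rfl | rfl | rfl, ha, hb⟩
          · left; rfl
          · right; rfl
          · omega
        · rintro (rfl | rfl)
          · exact ⟨by tauto, by omega, by omega⟩
          · exact ⟨by tauto, by omega, by omega⟩
      rw [this, Finset.card_insert_of_notMem (by simp; omega), Finset.card_singleton]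
    · intro n hn2 hnm
      rw [hcnt n (by omega) hnm]
      by_cases hnk : n ≤ k
      · have hsub : ({1, k, j} : Finset ℕ) ∩ Finset.Ico n (n+m) ⊆ {k} := by
          intro i hi
          simp only [Finset.mem_inter, Finset.mem_insert, Finset.mem_singleton,
            Finset.mem_Ico] at hi ⊢
          rcases hi with ⟨rfl | rfl | rfl, ha, hb⟩
          · omega
          · rfl
          · omega
        have := Finset.card_le_card hsub
        simp only [Finset.card_singleton] at this
        omega
      · have hsub : ({1, k, j} : Finset ℕ) ∩ Finset.Ico n (n+m) ⊆ {j} := by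
          intro i hi
          simp only [Finset.mem_inter, Finset.mem_insert, Finset.mem_singleton,
            Finset.mem_Ico] at hi ⊢
          rcases hi with ⟨rfl | rfl | rfl, ha, hb⟩
          · omega
          · omega
          · rfl
        have := Finset.card_le_card hsub
        simp only [Finset.card_singleton] at this
        omega
    · exact (hω 1 (Finset.mem_Icc.mpr ⟨le_rfl, by omega⟩)).mpr (by simp)

end Forward

section Counting

lemma gsA_card (m : ℕ) : (gsA m).card = m - 1 := by
  have hinj : Set.InjOn (fun k => ({1, k} : Finset ℕ)) (Finset.Icc 2 m) := by
    intro a ha b hb hab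
    have hab' : ({1, a} : Finset ℕ) = {1, b} := hab
    simp only [Finset.coe_Icc, Set.mem_Icc] at ha hb
    have : a ∈ ({1, b} : Finset ℕ) := by rw [← hab']; simp
    simp only [Finset.mem_insert, Finset.mem_singleton] at this
    omega
  rw [gsA, Finset.card_image_of_injOn hinj, Nat.card_Icc]
  omega

lemma gsB_card (m : ℕ) (hm : 3 ≤ m) : (gsB m).card * 2 = (m-1) * (m-2) := by
  rw [gsB, Finset.card_biUnion]
  · have h1 : ∀ k ∈ Finset.Icc 2 (m-1),
        ((Finset.Icc (m+k) (2*m-1)).image fun j => ({1, k, j} : Finset ℕ)).card = m - k := by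
      intro k hk
      simp only [Finset.mem_Icc] at hk
      have hinj : Set.InjOn (fun j => ({1, k, j} : Finset ℕ)) (Finset.Icc (m+k) (2*m-1)) := by
        intro a ha b hb hab
        have hab' : ({1, k, a} : Finset ℕ) = {1, k, b} := hab
        simp only [Finset.coe_Icc, Set.mem_Icc] at ha hb
        have : a ∈ ({1, k, b} : Finset ℕ) := by rw [← hab']; simp
        simp only [Finset.mem_insert, Finset.mem_singleton] at this
        omega
      rw [Finset.card_image_of_injOn hinj, Nat.card_Icc]
      omega
    rw [Finset.sum_congr rfl h1]
    have h2 : ∑ k ∈ Finset.Icc 2 (m-1), (m - k) = ∑ i ∈ Finset.Icc 1 (m-2), i := by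
      apply Finset.sum_nbij' (fun k => m - k) (fun i => m - i)
      · intro a ha; simp only [Finset.mem_Icc] at ha ⊢; omega
      · intro a ha; simp only [Finset.mem_Icc] at ha ⊢; omega
      · intro a ha; simp only [Finset.mem_Icc] at ha; omega
      · intro a ha; simp only [Finset.mem_Icc] at ha; omega
      · intro a ha; rfl
    have h3 : ∑ i ∈ Finset.Icc 1 (m-2), i = ∑ i ∈ Finset.range (m-1), i := by
      rw [show Finset.range (m-1) = insert 0 (Finset.Icc 1 (m-2)) by
        ext x; simp only [Finset.mem_range, Finset.mem_insert, Finset.mem_Icc]; omega]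
      rw [Finset.sum_insert (by simp)]
      simp
    rw [h2, h3, Finset.sum_range_id_mul_two, Nat.sub_sub]
  · intro k hk k' hk' hne
    simp only [Finset.mem_coe, Finset.mem_Icc] at hk hk'
    simp only [Finset.disjoint_left]
    intro S hS hS'
    simp only [Finset.mem_image, Finset.mem_Icc] at hS hS'
    obtain ⟨j, hj, rfl⟩ := hS
    obtain ⟨j', hj', hEq⟩ := hS'
    apply hne
    have hEq' : ({1, k', j'} : Finset ℕ) = {1, k, j} := hEq
    have hk1 : k ∈ ({1, k', j'} : Finset ℕ) := by rw [hEq']; simp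
    simp only [Finset.mem_insert, Finset.mem_singleton] at hk1
    omega

lemma gsA_mem_card (m : ℕ) {S : Finset ℕ} (hS : S ∈ gsA m) : S.card = 2 := by
  simp only [gsA, Finset.mem_image, Finset.mem_Icc] at hS
  obtain ⟨k, ⟨hk2, hkm⟩, rfl⟩ := hS
  rw [Finset.card_insert_of_notMem (by simp; omega), Finset.card_singleton]

lemma gsB_mem_card (m : ℕ) (hm : 3 ≤ m) {S : Finset ℕ} (hS : S ∈ gsB m) : S.card = 3 := by
  simp only [gsB, Finset.mem_biUnion, Finset.mem_image, Finset.mem_Icc] at hS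
  obtain ⟨k, ⟨hk2, hkm⟩, j, ⟨hjl, hju⟩, rfl⟩ := hS
  rw [Finset.card_insert_of_notMem (by simp; omega),
    Finset.card_insert_of_notMem (by simp; omega), Finset.card_singleton]

lemma gsAB_disjoint (m : ℕ) (hm : 3 ≤ m) : Disjoint (gsA m) (gsB m) := by
  rw [Finset.disjoint_left]
  intro S hA hB
  have h2 := gsA_mem_card m hA
  have h3 := gsB_mem_card m hm hB
  omega

lemma goodSets_subset (m : ℕ) (hm : 3 ≤ m) {S : Finset ℕ} (hS : S ∈ goodSets m) :
    S ⊆ Finset.Icc 1 (2*m-1) := by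
  simp only [goodSets, gsA, gsB, Finset.mem_union, Finset.mem_image, Finset.mem_biUnion,
    Finset.mem_Icc] at hS
  rcases hS with ⟨k, ⟨hk2, hkm⟩, rfl⟩ | ⟨k, ⟨hk2, hkm⟩, j, ⟨hjl, hju⟩, rfl⟩ <;>
  · intro i hi
    simp only [Finset.mem_insert, Finset.mem_singleton] at hi
    simp only [Finset.mem_Icc]
    rcases hi with rfl | hi
    · omega
    · rcases hi with rfl | hi <;> first | omega | (rcases hi with rfl; omega) |
        (rw [Finset.mem_singleton] at hi; subst hi; omega)

end Counting

section Meas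
variable {Ω : Type*} [MeasurableSpace Ω] (μ : Measure Ω) [IsProbabilityMeasure μ]
  (X : ℕ → Ω → Bool) (hmeas : ∀ i, Measurable (X i))
  (hindep : iIndepFun X μ)
  (p q : ℝ) (hp : 0 < p) (hp1 : p < 1) (hq : q = 1 - p)
  (hX : ∀ i, μ {ω | X i ω = true} = ENNReal.ofReal p)

include hp hq hX hmeas in
omit [IsProbabilityMeasure μ] in
lemma meas_false [IsProbabilityMeasure μ] (i : ℕ) :
    μ {ω | X i ω = false} = ENNReal.ofReal q := by
  have hc : {ω | X i ω = false} = {ω | X i ω = true}ᶜ := by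
    ext ω; simp
  have hms : MeasurableSet {ω | X i ω = true} := hmeas i (measurableSet_singleton true)
  rw [hc, prob_compl_eq_one_sub hms, hX i, hq,
    ENNReal.ofReal_sub 1 hp.le, ENNReal.ofReal_one]

omit [MeasurableSpace Ω] in
lemma atomSet_eq (m : ℕ) (S : Finset ℕ) :
    atomSet X m S = ⋂ i ∈ Finset.Icc 1 (2*m-1),
      X i ⁻¹' {(if i ∈ S then false else true : Bool)} := by
  ext ω
  simp only [atomSet, Set.mem_setOf_eq, Set.mem_iInter, Set.mem_preimage,
    Set.mem_singleton_iff]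
  refine forall_congr' fun i => forall_congr' fun hi => ?_
  by_cases h : i ∈ S <;> cases hb : X i ω <;> simp [h, hb]

include hmeas in
lemma atomSet_measurable (m : ℕ) (S : Finset ℕ) :
    MeasurableSet (atomSet X m S) := by
  rw [atomSet_eq]
  exact Finset.measurableSet_biInter _ fun i _ =>
    hmeas i (measurableSet_singleton _)

include hp hp1 hq hX hmeas hindep in
lemma atom_meas (m : ℕ) (S : Finset ℕ) (hsub : S ⊆ Finset.Icc 1 (2*m-1)) :
    μ (atomSet X m S) = ENNReal.ofReal (q ^ S.card * p ^ (2*m-1 - S.card)) := by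
  classical
  rw [atomSet_eq]
  rw [hindep.meas_biInter (fun i _ => ⟨{(if i ∈ S then false else true : Bool)},
    measurableSet_singleton _, rfl⟩)]
  have hfac : ∀ i, μ (X i ⁻¹' {(if i ∈ S then false else true : Bool)}) =
      ENNReal.ofReal (if i ∈ S then q else p) := by
    intro i
    by_cases h : i ∈ S <;> simp only [h, if_true, if_false]
    · have : X i ⁻¹' {false} = {ω | X i ω = false} := rfl
      rw [this, meas_false μ X hmeas p q hp hq hX]
    · have : X i ⁻¹' {true} = {ω | X i ω = true} := rfl
      rw [this, hX i]
  rw [Finset.prod_congr rfl (fun i _ => hfac i),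
    ← ENNReal.ofReal_prod_of_nonneg (fun i _ => by
      split
      · rw [hq]; linarith
      · exact hp.le)]
  congr 1
  rw [Finset.prod_ite (fun _ => q) (fun _ => p), Finset.prod_const, Finset.prod_const]
  have h1 : (Finset.Icc 1 (2*m-1)).filter (· ∈ S) = S := by
    rw [Finset.filter_mem_eq_inter]
    exact Finset.inter_eq_right.mpr hsub
  have h2 : (Finset.Icc 1 (2*m-1)).filter (· ∉ S) = Finset.Icc 1 (2*m-1) \ S := by
    ext i; simp [Finset.mem_filter, Finset.mem_sdiff]
  rw [h1, h2, Finset.card_sdiff_of_subset hsub, Nat.card_Icc]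
  congr 2

end Meas

theorem stmt7 {Ω : Type*} [MeasurableSpace Ω] (μ : Measure Ω) [IsProbabilityMeasure μ]
    (X : ℕ → Ω → Bool) (hmeas : ∀ i, Measurable (X i))
    (hindep : iIndepFun X μ)
    (p q : ℝ) (hp : 0 < p) (hp1 : p < 1) (hq : q = 1 - p)
    (hX : ∀ i, μ {ω | X i ω = true} = ENNReal.ofReal p)
    (m : ℕ) (hm : 3 ≤ m) :
    (μ (contamRun X 2 1 m ∩ (⋂ n ∈ Finset.Icc 2 m, (contamRun X 2 n m)ᶜ) ∩
        {ω | X 1 ω = false})).toReal =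
      ((m : ℝ) - 1) * q ^ 2 * p ^ (2 * m - 3) +
        ((m : ℝ) - 1) * ((m : ℝ) - 2) / 2 * q ^ 3 * p ^ (2 * m - 4) := by
  classical
  have hqpos : 0 ≤ q := by rw [hq]; linarith
  -- event identity
  have hevent : contamRun X 2 1 m ∩ (⋂ n ∈ Finset.Icc 2 m, (contamRun X 2 n m)ᶜ) ∩
      {ω | X 1 ω = false} = ⋃ S ∈ goodSets m, atomSet X m S := by
    ext ω
    simp only [Set.mem_inter_iff, Set.mem_iInter, Set.mem_compl_iff, Set.mem_setOf_eq,
      contamRun, Finset.mem_Icc, Set.mem_iUnion, exists_prop, and_imp]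
    constructor
    · rintro ⟨⟨hA, hB⟩, hC⟩
      exact forward X m hm ω hA (fun n h1 h2 => hB n h1 h2) hC
    · rintro ⟨S, hS, hω⟩
      obtain ⟨hA, hB, hC⟩ := backward X m hm ω S hS hω
      exact ⟨⟨hA, fun n hn1 hn2 => hB n hn1 hn2⟩, hC⟩
  rw [hevent]
  -- disjoint union
  have hdisj : Set.PairwiseDisjoint ↑(goodSets m) (atomSet X m) := by
    intro S hS T hT hST
    rw [Function.onFun, Set.disjoint_left]
    intro ω hωS hωT
    apply hST
    ext i
    constructor
    · intro hi
      exact (hωT i (goodSets_subset m hm hS hi)).mp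
        ((hωS i (goodSets_subset m hm hS hi)).mpr hi)
    · intro hi
      exact (hωS i (goodSets_subset m hm hT hi)).mp
        ((hωT i (goodSets_subset m hm hT hi)).mpr hi)
  rw [measure_biUnion_finset hdisj (fun S _ => atomSet_measurable X hmeas m S)]
  have hval : ∀ S ∈ goodSets m, μ (atomSet X m S) =
      ENNReal.ofReal (q ^ S.card * p ^ (2*m-1 - S.card)) := fun S hS =>
    atom_meas μ X hmeas hindep p q hp hp1 hq hX m S (goodSets_subset m hm hS)
  rw [Finset.sum_congr rfl hval]
  rw [show goodSets m = gsA m ∪ gsB m from rfl,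
    Finset.sum_union (gsAB_disjoint m hm)]
  have hsumA : ∑ S ∈ gsA m, ENNReal.ofReal (q ^ S.card * p ^ (2*m-1 - S.card)) =
      (m - 1 : ℕ) • ENNReal.ofReal (q ^ 2 * p ^ (2*m - 3)) := by
    rw [Finset.sum_congr rfl (fun S hS => by
      rw [gsA_mem_card m hS, show 2*m-1-2 = 2*m-3 by omega]),
      Finset.sum_const, gsA_card]
  have hsumB : ∑ S ∈ gsB m, ENNReal.ofReal (q ^ S.card * p ^ (2*m-1 - S.card)) =
      (gsB m).card • ENNReal.ofReal (q ^ 3 * p ^ (2*m - 4)) := by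
    rw [Finset.sum_congr rfl (fun S hS => by
      rw [gsB_mem_card m hm hS, show 2*m-1-3 = 2*m-4 by omega]),
      Finset.sum_const]
  rw [hsumA, hsumB]
  have hne1 : (m - 1 : ℕ) • ENNReal.ofReal (q ^ 2 * p ^ (2*m - 3)) ≠ ⊤ := by
    rw [nsmul_eq_mul]
    exact ENNReal.mul_ne_top (ENNReal.natCast_ne_top _) ENNReal.ofReal_ne_top
  have hne2 : (gsB m).card • ENNReal.ofReal (q ^ 3 * p ^ (2*m - 4)) ≠ ⊤ := by
    rw [nsmul_eq_mul]
    exact ENNReal.mul_ne_top (ENNReal.natCast_ne_top _) ENNReal.ofReal_ne_top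
  rw [ENNReal.toReal_add hne1 hne2]
  rw [nsmul_eq_mul, nsmul_eq_mul, ENNReal.toReal_mul, ENNReal.toReal_mul,
    ENNReal.toReal_natCast, ENNReal.toReal_natCast,
    ENNReal.toReal_ofReal (by positivity), ENNReal.toReal_ofReal (by positivity)]
  have hc1 : ((m - 1 : ℕ) : ℝ) = (m : ℝ) - 1 := by
    have : (1:ℕ) ≤ m := by omega
    push_cast [this]; ring
  have hc2 : ((gsB m).card : ℝ) = ((m:ℝ) - 1) * ((m:ℝ) - 2) / 2 := by
    have h := gsB_card m hm
    have : ((gsB m).card : ℝ) * 2 = ((m-1 : ℕ) : ℝ) * ((m-2 : ℕ) : ℝ) := by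
      exact_mod_cast congrArg (Nat.cast : ℕ → ℝ) h
    have h1 : ((m-1 : ℕ) : ℝ) = (m:ℝ) - 1 := by
      have : (1:ℕ) ≤ m := by omega
      push_cast [this]; ring
    have h2 : ((m-2 : ℕ) : ℝ) = (m:ℝ) - 2 := by
      have : (2:ℕ) ≤ m := by omega
      push_cast [this]; ring
    rw [h1, h2] at this
    linarith
  rw [hc1, hc2]
  ring
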